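/- The expression β²ω₁²ω₂² − αβ(ω₁²+ω₂²) + α², viewed as a quadratic in α with β ≠ 0, vanishes if and only if α = βω₁² or α = βω₂²; consequently the Poisson bivector of the Pais–Uhlenbeck oscillator with anchor parameters (α,β) ≠ (0,0) is degenerate exactly when α/β ∈ {ω₁², ω₂²}. -/

import Mathlib

/-- the Pfaffian `β²ω₁²ω₂² − αβ(ω₁²+ω₂²) + α²` of the Pais–Uhlenbeck Poisson
bivector vanishes (for `β ≠ 0`) iff `α = βω₁²` or `α = βω₂²`; consequently for
`(α,β) ≠ (0,0)` the bivector is degenerate exactly when `α/β ∈ {ω₁², ω₂²}`. -/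
theorem pais_uhlenbeck_pfaffian_zero_iff
    (α β ω₁ ω₂ : ℝ) (hω₁ : 0 < ω₁) (hω₂ : 0 < ω₂) (hne : ω₁ ≠ ω₂) :
    (β ≠ 0 →
      (β ^ 2 * ω₁ ^ 2 * ω₂ ^ 2 - α * β * (ω₁ ^ 2 + ω₂ ^ 2) + α ^ 2 = 0 ↔
        α = β * ω₁ ^ 2 ∨ α = β * ω₂ ^ 2)) ∧
    ((α, β) ≠ (0, 0) →
      (β ^ 2 * ω₁ ^ 2 * ω₂ ^ 2 - α * β * (ω₁ ^ 2 + ω₂ ^ 2) + α ^ 2 = 0 ↔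
        α / β = ω₁ ^ 2 ∨ α / β = ω₂ ^ 2)) := by
  have hfac : β ^ 2 * ω₁ ^ 2 * ω₂ ^ 2 - α * β * (ω₁ ^ 2 + ω₂ ^ 2) + α ^ 2
      = (α - β * ω₁ ^ 2) * (α - β * ω₂ ^ 2) := by ring
  have key : β ^ 2 * ω₁ ^ 2 * ω₂ ^ 2 - α * β * (ω₁ ^ 2 + ω₂ ^ 2) + α ^ 2 = 0 ↔
      α = β * ω₁ ^ 2 ∨ α = β * ω₂ ^ 2 := by
    rw [hfac, mul_eq_zero, sub_eq_zero, sub_eq_zero]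
  refine ⟨fun _ => key, fun h => ?_⟩
  by_cases hβ : β = 0
  · subst hβ
    have hα : α ≠ 0 := fun h0 => h (by simp [h0])
    rw [key]
    constructor
    · rintro (h1 | h1) <;> simp_all
    · rintro (h1 | h1)
      · rw [div_zero] at h1; exact absurd h1.symm (ne_of_gt (pow_pos hω₁ 2))
      · rw [div_zero] at h1; exact absurd h1.symm (ne_of_gt (pow_pos hω₂ 2))
  · rw [key]
    constructor
    · rintro (h1 | h1)
      · exact Or.inl (by field_simp [h1]; exact h1)
      · exact Or.inr (by field_simp [h1]; exact h1)
    · rintro (h1 | h1)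
      · exact Or.inl (by field_simp at h1; linarith [h1])
      · exact Or.inr (by field_simp at h1; linarith [h1])
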